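/- The discretized non-adaptive test operator is close to the exact one in operator norm: ‖Ω̄_h(𝒜) − Ω̄(𝒜)_h‖ ≤ (Σ_{l=1}^m |A_l|/(mh)) sin(π/(4h)) = (n/(mh)) sin(π/(4h)). -/

import Mathlib

open scoped BigOperators ComplexOrder
open Matrix Complex

noncomputable section

/-- Computational-basis index set of `(ℂ²)^{⊗n}`. -/
abbrev QIdx (n : ℕ) := Fin n → Fin 2

/-- Linear operators on `(ℂ²)^{⊗n}`, represented as matrices. -/
abbrev QOp (n : ℕ) := Matrix (QIdx n) (QIdx n) ℂ

/-- A bit viewed as a real number. -/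
def bR (b : Fin 2) : ℝ := (b : ℕ)

/-- The ℓ²→ℓ² operator norm of a matrix. -/
noncomputable def opNorm {ι : Type*} [Fintype ι] [DecidableEq ι] (M : Matrix ι ι ℂ) : ℝ :=
  ‖Matrix.toEuclideanCLM (𝕜 := ℂ) M‖

/-- The weighted graph state `|G⟩`, as amplitudes
`⟨z|G⟩ = 2^{-n/2} ∏_{j<k} e^{i θ_{jk} z_j z_k}` (for symmetric `θ`,
`∑_{j<k} = (1/2) ∑_{j,k}`). -/
noncomputable def gVec (n : ℕ) (θ : Fin n → Fin n → ℝ) : QIdx n → ℂ :=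
  fun z => ((Real.sqrt (2 ^ n))⁻¹ : ℝ) *
    Complex.exp (Complex.I * ((1 / 2 * ∑ j, ∑ k, θ j k * bR (z j) * bR (z k) : ℝ) : ℂ))

/-- The rank-one projection `|G⟩⟨G|`. -/
noncomputable def gProj (n : ℕ) (θ : Fin n → Fin n → ℝ) : QOp n :=
  Matrix.vecMulVec (gVec n θ) (star (gVec n θ))

/-- `α_k(z) = ∑_{j ∈ C_k} θ_{jk} z_j` (using `θ_{jk} = 0` on non-edges). -/
noncomputable def alphaAngle (n : ℕ) (θ : Fin n → Fin n → ℝ) (k : Fin n) (z : QIdx n) : ℝ :=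
  ∑ j, θ j k * bR (z j)

/-- The discretization `α ↦ α^h`, the unique point `jπ/h` with
`jπ/h - π/(2h) ≤ α < jπ/h + π/(2h)`. -/
noncomputable def alphaH (h : ℕ) (α : ℝ) : ℝ :=
  (⌊(h : ℝ) * α / Real.pi + 1 / 2⌋ : ℤ) * Real.pi / h

/-- Matrix entry `⟨b|α⟩⟨α|b'⟩ = (1/2) e^{iα(b-b')}` of the projection onto
`|α⟩ = (|0⟩ + e^{iα}|1⟩)/√2`. -/
noncomputable def phaseFac (α : ℝ) (b b' : Fin 2) : ℂ :=
  (1 / 2 : ℂ) * Complex.exp (Complex.I * ((α * (bR b - bR b') : ℝ) : ℂ))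

/-- The projection `P_l = ∏_{k ∈ A_l} Q_k`, written out entrywise:
`P_l = ∑_z (⊗_{k∈A_l} |α_k(z)⟩⟨α_k(z)|) ⊗ |z⟩⟨z|_{A_l^c}`. -/
noncomputable def Pop (n : ℕ) (θ : Fin n → Fin n → ℝ) (A : Finset (Fin n)) : QOp n :=
  Matrix.of fun x y =>
    if ∀ j ∉ A, x j = y j then ∏ k ∈ A, phaseFac (alphaAngle n θ k x) (x k) (y k) else 0

/-- The test operator `Ω(𝒜) = (1/m) ∑_l P_l`. -/
noncomputable def OmegaA (n m : ℕ) (θ : Fin n → Fin n → ℝ) (A : Fin m → Finset (Fin n)) :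
    QOp n :=
  (m : ℂ)⁻¹ • ∑ l, Pop n θ (A l)

/-- The discretized projection `P_{l;h}` (replace `α_k(z)` by `α_k^h(z)`). -/
noncomputable def PopH (n : ℕ) (θ : Fin n → Fin n → ℝ) (h : ℕ) (A : Finset (Fin n)) : QOp n :=
  Matrix.of fun x y =>
    if ∀ j ∉ A, x j = y j then
      ∏ k ∈ A, phaseFac (alphaH h (alphaAngle n θ k x)) (x k) (y k) else 0

/-- The discretized test operator `Ω_h(𝒜) = (1/m) ∑_l P_{l;h}`. -/
noncomputable def OmegaAH (n m : ℕ) (θ : Fin n → Fin n → ℝ) (h : ℕ)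
    (A : Fin m → Finset (Fin n)) : QOp n :=
  (m : ℂ)⁻¹ • ∑ l, PopH n θ h (A l)

/-- Entry of the single-site operator `(1/h) |α⟩⟨α| + (1 - 1/h) I`. -/
noncomputable def mixFac (h : ℕ) (α : ℝ) (b b' : Fin 2) : ℂ :=
  (1 - (h : ℂ)⁻¹) * (if b = b' then 1 else 0) + (h : ℂ)⁻¹ * phaseFac α b b'

/-- `P̄_l = ∏_{k ∈ A_l} ((1/h(k)) Q_k + (1 - 1/h(k)) I)`, written out entrywise. -/
noncomputable def PBar (n : ℕ) (θ : Fin n → Fin n → ℝ) (hf : Fin n → ℕ) (A : Finset (Fin n)) :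
    QOp n :=
  Matrix.of fun x y =>
    if ∀ j ∉ A, x j = y j then ∏ k ∈ A, mixFac (hf k) (alphaAngle n θ k x) (x k) (y k) else 0

/-- `Ω̄(𝒜)_𝐡 = (1/m) ∑_l P̄_l`. -/
noncomputable def OmegaBar (n m : ℕ) (θ : Fin n → Fin n → ℝ) (hf : Fin n → ℕ)
    (A : Fin m → Finset (Fin n)) : QOp n :=
  (m : ℂ)⁻¹ • ∑ l, PBar n θ hf (A l)

/-- `P̄_{l;h} = ∏_{k ∈ A_l} ((1/h) Q_{k;h} + (1 - 1/h) I)`, written out entrywise. -/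
noncomputable def PBarH (n : ℕ) (θ : Fin n → Fin n → ℝ) (h : ℕ) (A : Finset (Fin n)) : QOp n :=
  Matrix.of fun x y =>
    if ∀ j ∉ A, x j = y j then
      ∏ k ∈ A, mixFac h (alphaH h (alphaAngle n θ k x)) (x k) (y k) else 0

/-- `Ω̄_h(𝒜) = (1/m) ∑_l P̄_{l;h}`. -/
noncomputable def OmegaBarH (n m : ℕ) (θ : Fin n → Fin n → ℝ) (h : ℕ)
    (A : Fin m → Finset (Fin n)) : QOp n :=
  (m : ℂ)⁻¹ • ∑ l, PBarH n θ h (A l)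

/-- Index set for `N+1` copies of the `n`-qubit space. -/
abbrev BIdx (n N : ℕ) := Fin (N + 1) → QIdx n

/-- `(⊗_{j ≠ i} Ω) ⊗ I_i` acting on the `N+1` copies. -/
noncomputable def testAll (n N : ℕ) (Ω : QOp n) (i : Fin (N + 1)) :
    Matrix (BIdx n N) (BIdx n N) ℂ :=
  Matrix.of fun x y =>
    (if x i = y i then 1 else 0) * ∏ j ∈ Finset.univ.erase i, Ω (x j) (y j)

/-- Acceptance probability `p = (1/(N+1)) ∑_i Tr[((⊗_{j≠i} Ω) ⊗ I_i) ρ]` of the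
`N`-random sampling test of `Ω` on a state `ρ` of `N+1` copies. -/
noncomputable def acceptProb (n N : ℕ) (Ω : QOp n) (ρ : Matrix (BIdx n N) (BIdx n N) ℂ) : ℝ :=
  (((N : ℂ) + 1)⁻¹ * ∑ i, (testAll n N Ω i * ρ).trace).re

/-- Partial trace over all copies except copy `i`. -/
noncomputable def ptraceAt (n N : ℕ) (i : Fin (N + 1))
    (M : Matrix (BIdx n N) (BIdx n N) ℂ) : QOp n :=
  Matrix.of fun a b => ∑ x : BIdx n N, if x i = a then M x (Function.update x i b) else 0

/-- The conditional state of the remaining copy given that the test is passed: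
`σ = (1/((N+1)p)) ∑_i Tr_{j≠i}[((⊗_{j≠i} Ω) ⊗ I_i) ρ]`. -/
noncomputable def condState (n N : ℕ) (Ω : QOp n) (ρ : Matrix (BIdx n N) (BIdx n N) ℂ) :
    QOp n :=
  (((((N : ℝ) + 1) * acceptProb n N Ω ρ : ℝ) : ℂ))⁻¹ •
    ∑ i, ptraceAt n N i (testAll n N Ω i * ρ)

/-- The i.i.d. state `(|G⟩⟨G|)^{⊗(N+1)}`. -/
noncomputable def iidState (n N : ℕ) (θ : Fin n → Fin n → ℝ) :
    Matrix (BIdx n N) (BIdx n N) ℂ :=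
  Matrix.of fun x y => ∏ j, gVec n θ (x j) * star (gVec n θ (y j))



/-! ### Auxiliary machinery for the proof -/

namespace OmegaAux

variable {n : ℕ}

lemma opNorm_one' (n : ℕ) : opNorm (1 : QOp n) = 1 := by
  simp [opNorm, _root_.map_one]

lemma opNorm_zero' (n : ℕ) : opNorm (0 : QOp n) = 0 := by
  simp [opNorm, _root_.map_zero]

lemma opNorm_nonneg (M : QOp n) : 0 ≤ opNorm M := norm_nonneg _

lemma opNorm_mul_le (M N : QOp n) : opNorm (M * N) ≤ opNorm M * opNorm N := by
  simp only [opNorm, _root_.map_mul]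
  exact norm_mul_le _ _

lemma opNorm_add_le (M N : QOp n) : opNorm (M + N) ≤ opNorm M + opNorm N := by
  simp only [opNorm, map_add]; exact norm_add_le _ _

lemma opNorm_smul (c : ℂ) (M : QOp n) : opNorm (c • M) = ‖c‖ * opNorm M := by
  simp only [opNorm, _root_.map_smul]
  exact norm_smul c (Matrix.toEuclideanCLM (𝕜 := ℂ) M)

lemma opNorm_sum_le {α : Type*} (t : Finset α) (f : α → QOp n) :
    opNorm (∑ l ∈ t, f l) ≤ ∑ l ∈ t, opNorm (f l) := by
  simp only [opNorm, map_sum]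
  exact norm_sum_le _ _

lemma opNorm_le_one_of_proj (M : QOp n) (hs : star M = M) (hi : M * M = M) :
    opNorm M ≤ 1 := by
  show ‖Matrix.toEuclideanCLM (𝕜 := ℂ) M‖ ≤ 1
  set p := Matrix.toEuclideanCLM (𝕜 := ℂ) M with hp
  have h1 : star p = p := by rw [hp, ← map_star]; exact congrArg _ hs
  have h2 : p * p = p := by rw [hp, ← _root_.map_mul]; exact congrArg _ hi
  have h3 : ‖p‖ * ‖p‖ = ‖p‖ := by
    calc ‖p‖ * ‖p‖ = ‖star p * p‖ := (CStarRing.norm_star_mul_self).symm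
    _ = ‖p‖ := by rw [h1, h2]
  nlinarith [norm_nonneg p]

/-- Generic "site operator" at qubit `k`. -/
noncomputable def siteMat (k : Fin n) (g : QIdx n → Matrix (Fin 2) (Fin 2) ℂ) : QOp n :=
  Matrix.of fun x y => if ∀ j, j ≠ k → x j = y j then g x (x k) (y k) else 0

/-- Generic product-form operator on a set of qubits. -/
noncomputable def prodMat (A : Finset (Fin n)) (f : Fin n → QIdx n → Matrix (Fin 2) (Fin 2) ℂ) :
    QOp n :=
  Matrix.of fun x y => if ∀ j ∉ A, x j = y j then ∏ k ∈ A, f k x (x k) (y k) else 0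

lemma sum_update (x : QIdx n) (k : Fin n) (F : QIdx n → ℂ)
    (hF : ∀ z, ¬ (∀ j, j ≠ k → x j = z j) → F z = 0) :
    ∑ z, F z = ∑ c : Fin 2, F (Function.update x k c) := by
  have hinj : Function.Injective (fun c => Function.update x k c) := by
    intro a b hab
    have := congrFun hab k
    simpa using this
  calc ∑ z, F z = ∑ z ∈ Finset.univ.image (fun c => Function.update x k c), F z := by
        apply (Finset.sum_subset (Finset.subset_univ _) _).symm
        intro z _ hz
        apply hF
        intro hcon
        apply hz
        simp only [Finset.mem_image, Finset.mem_univ, true_and]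
        refine ⟨z k, ?_⟩
        funext j
        rcases eq_or_ne j k with rfl | hj
        · simp [Function.update]
        · simp [Function.update, hj, hcon j hj]
    _ = ∑ c : Fin 2, F (Function.update x k c) :=
        Finset.sum_image (by intro a _ b _ hab; exact hinj hab)

lemma siteMat_mul (k : Fin n) (g g' : QIdx n → Matrix (Fin 2) (Fin 2) ℂ)
    (hg' : ∀ x c, g' (Function.update x k c) = g' x) :
    siteMat k g * siteMat k g' = siteMat k (fun x => g x * g' x) := by
  ext x y
  rw [Matrix.mul_apply]
  rw [sum_update x k _ (by
    intro z hz
    simp only [siteMat, Matrix.of_apply]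
    rw [if_neg (fun hcon => hz hcon)]
    exact zero_mul _)]
  simp only [siteMat, Matrix.of_apply]
  by_cases hB : ∀ j, j ≠ k → x j = y j
  · rw [if_pos hB, Matrix.mul_apply]
    refine Finset.sum_congr rfl fun c _ => ?_
    rw [if_pos (by intro j hj; simp [Function.update, hj]),
        if_pos (by intro j hj; simp [Function.update, hj, hB j hj]),
        hg', Function.update_self]
  · rw [if_neg hB]
    apply Finset.sum_eq_zero
    intro c _
    rw [if_pos (by intro j hj; simp [Function.update, hj])]
    rw [if_neg (by
      intro hcon; apply hB
      intro j hj
      have := hcon j hj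
      simpa [Function.update, hj] using this)]
    exact mul_zero _

lemma siteMat_sub (k : Fin n) (g g' : QIdx n → Matrix (Fin 2) (Fin 2) ℂ) :
    siteMat k g - siteMat k g' = siteMat k (fun x => g x - g' x) := by
  ext x y
  simp only [siteMat, Matrix.sub_apply, Matrix.of_apply]
  by_cases hB : ∀ j, j ≠ k → x j = y j
  · rw [if_pos hB, if_pos hB, if_pos hB]
  · rw [if_neg hB, if_neg hB, if_neg hB]; simp

lemma prodMat_empty (f : Fin n → QIdx n → Matrix (Fin 2) (Fin 2) ℂ) :
    prodMat (∅ : Finset (Fin n)) f = 1 := by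
  ext x y
  simp only [prodMat, Matrix.of_apply, Finset.notMem_empty, not_false_iff, forall_true_left,
    Finset.prod_empty, Matrix.one_apply]
  congr 1
  simp [funext_iff]

lemma prodMat_insert (k : Fin n) (A : Finset (Fin n)) (hk : k ∉ A)
    (f : Fin n → QIdx n → Matrix (Fin 2) (Fin 2) ℂ)
    (H : ∀ k' ∈ A, ∀ x c, f k' (Function.update x k c) = f k' x) :
    prodMat (insert k A) f = siteMat k (f k) * prodMat A f := by
  ext x y
  rw [Matrix.mul_apply]
  rw [sum_update x k _ (by
    intro z hz
    simp only [siteMat, Matrix.of_apply]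
    rw [if_neg (fun hcon => hz hcon)]
    exact zero_mul _)]
  simp only [siteMat, prodMat, Matrix.of_apply]
  have key : ∀ c : Fin 2,
      (if ∀ j, j ≠ k → x j = Function.update x k c j then
          f k x (x k) (Function.update x k c k) else 0) *
      (if ∀ j ∉ A, Function.update x k c j = y j then
          ∏ k' ∈ A, f k' (Function.update x k c) (Function.update x k c k') (y k') else 0)
      = (if c = y k then 1 else 0) * (if ∀ j ∉ insert k A, x j = y j then
          f k x (x k) (y k) * ∏ k' ∈ A, f k' x (x k') (y k') else 0) := by
    intro c
    rw [if_pos (by intro j hj; simp [Function.update, hj])]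
    have hupk : Function.update x k c k = c := Function.update_self k c x
    by_cases hc : c = y k
    · subst hc
      rw [hupk]
      by_cases hB : ∀ j ∉ insert k A, x j = y j
      · rw [if_pos, if_pos hB, if_pos rfl]
        · rw [one_mul]
          congr 1
          refine Finset.prod_congr rfl fun k' hk' => ?_
          have hk'k : k' ≠ k := fun hcon => hk (hcon ▸ hk')
          rw [H k' hk', Function.update_of_ne hk'k]
        · intro j hj
          rcases eq_or_ne j k with rfl | hjk
          · simp [Function.update]
          · simp only [Function.update, dif_neg hjk]
            exact hB j (by simp [hjk, hj])
      · rw [if_neg, if_neg hB]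
        · simp
        · intro hcon
          apply hB
          intro j hj
          simp only [Finset.mem_insert, not_or] at hj
          have := hcon j hj.2
          simpa [Function.update, hj.1] using this
    · rw [if_neg, if_neg hc]
      · simp
      · intro hcon
        exact hc (by simpa [Function.update] using (hcon k hk))
  rw [Finset.sum_congr rfl fun c _ => key c]
  rw [← Finset.sum_mul]
  have : (∑ c : Fin 2, if c = y k then (1:ℂ) else 0) = 1 := by simp
  rw [this, one_mul]
  by_cases hB : ∀ j ∉ insert k A, x j = y j
  · rw [if_pos hB, if_pos hB, Finset.prod_insert hk]
  · rw [if_neg hB, if_neg hB]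

/-! ### Complex exponential estimates -/

lemma mySinAux (t : ℝ) : Complex.exp (I*t) - Complex.exp (-(I*t)) = 2 * Complex.sin t * I := by
  rw [Complex.sin]
  rw [show ((t:ℂ) * I) = I * t by ring, show (-(t:ℂ) * I) = -(I*t) by ring]
  field_simp
  ring_nf
  simp [Complex.I_sq]
  ring

lemma norm_exp_sub_exp (u v : ℝ) :
    ‖Complex.exp (I*u) - Complex.exp (I*v)‖ = 2*|Real.sin ((u-v)/2)| := by
  have key : Complex.exp (I*u) - Complex.exp (I*v)
      = Complex.exp (I*(((u+v)/2 : ℝ):ℂ)) * (2 * Complex.sin (((u-v)/2 : ℝ):ℂ) * I) := by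
    rw [← mySinAux ((u-v)/2), mul_sub, ← Complex.exp_add, ← Complex.exp_add]
    push_cast
    ring_nf
  rw [key, norm_mul, norm_mul, norm_mul]
  rw [show (I*(((u+v)/2 : ℝ):ℂ)) = ((((u+v)/2 : ℝ):ℂ)) * I by ring]
  rw [Complex.norm_exp_ofReal_mul_I]
  rw [← Complex.ofReal_sin]
  simp only [Complex.norm_real, Real.norm_eq_abs, Complex.norm_two, Complex.norm_I]
  ring

/-! ### 2×2 phase matrices -/

/-- The 2×2 matrix of `|α⟩⟨α|`. -/
noncomputable def pfMat (α : ℝ) : Matrix (Fin 2) (Fin 2) ℂ :=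
  Matrix.of fun b b' => phaseFac α b b'

/-- The 2×2 matrix of `(1/h)|α⟩⟨α| + (1-1/h) I`. -/
noncomputable def mixMat (h : ℕ) (α : ℝ) : Matrix (Fin 2) (Fin 2) ℂ :=
  Matrix.of fun b b' => mixFac h α b b'

lemma expFac (α u v w : ℝ) : Complex.exp (I * ((α * (u - w) : ℝ) : ℂ)) *
    Complex.exp (I * ((α * (w - v) : ℝ) : ℂ)) = Complex.exp (I * ((α * (u - v) : ℝ) : ℂ)) := by
  rw [← Complex.exp_add]
  congr 1
  push_cast
  ring

lemma pfMat_mul (α : ℝ) : pfMat α * pfMat α = pfMat α := by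
  ext b b'
  rw [Matrix.mul_apply, Fin.sum_univ_two]
  simp only [pfMat, Matrix.of_apply, phaseFac]
  have h0 := expFac α (bR b) (bR b') (bR 0)
  have h1 := expFac α (bR b) (bR b') (bR 1)
  calc (1/2:ℂ) * Complex.exp (I * ((α * (bR b - bR 0) : ℝ) : ℂ)) *
        ((1/2) * Complex.exp (I * ((α * (bR 0 - bR b') : ℝ) : ℂ))) +
      (1/2:ℂ) * Complex.exp (I * ((α * (bR b - bR 1) : ℝ) : ℂ)) *
        ((1/2) * Complex.exp (I * ((α * (bR 1 - bR b') : ℝ) : ℂ)))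
      = (1/4:ℂ) * (Complex.exp (I * ((α * (bR b - bR 0) : ℝ) : ℂ)) *
          Complex.exp (I * ((α * (bR 0 - bR b') : ℝ) : ℂ))) +
        (1/4:ℂ) * (Complex.exp (I * ((α * (bR b - bR 1) : ℝ) : ℂ)) *
          Complex.exp (I * ((α * (bR 1 - bR b') : ℝ) : ℂ))) := by ring
    _ = (1/2:ℂ) * Complex.exp (I * ((α * (bR b - bR b') : ℝ) : ℂ)) := by rw [h0, h1]; ring

lemma phaseFac_conj (α : ℝ) (b b' : Fin 2) :
    (starRingEnd ℂ) (phaseFac α b b') = phaseFac α b' b := by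
  simp only [phaseFac]
  rw [_root_.map_mul, ← Complex.exp_conj, _root_.map_mul, Complex.conj_I, Complex.conj_ofReal]
  rw [show (starRingEnd ℂ) ((1:ℂ)/2) = 1/2 from by
    rw [show ((1:ℂ)/2) = (((1/2:ℝ)):ℂ) by norm_num, Complex.conj_ofReal]]
  congr 1
  congr 1
  push_cast
  ring

lemma phaseFac_diag (α : ℝ) (b : Fin 2) : phaseFac α b b = 1/2 := by
  simp [phaseFac]

lemma norm_phaseFac_sub (α β : ℝ) (b b' : Fin 2) :
    ‖phaseFac β b b' - phaseFac α b b'‖ ≤ |Real.sin ((β - α)/2)| := by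
  simp only [phaseFac]
  rw [← mul_sub, norm_mul]
  rw [show ‖(1/2 : ℂ)‖ = 1/2 by simp]
  rw [norm_exp_sub_exp]
  fin_cases b <;> fin_cases b' <;>
    simp only [bR] <;> norm_num
  · rw [show (-β + α)/2 = -((β - α)/2) by ring, Real.sin_neg, abs_neg]
    linarith [abs_nonneg (Real.sin ((β - α)/2))]
  · linarith [abs_nonneg (Real.sin ((β - α)/2))]

/-! ### Norm bounds on site operators -/

def flip2 (b : Fin 2) : Fin 2 := b + 1

lemma flip2_flip2 (b : Fin 2) : flip2 (flip2 b) = b := by fin_cases b <;> decide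

lemma flip2_ne (b : Fin 2) : flip2 b ≠ b := by fin_cases b <;> decide

lemma sigma_invol (k : Fin n) :
    Function.Involutive (fun x : QIdx n => Function.update x k (flip2 (x k))) := by
  intro x
  simp only [Function.update_self]
  rw [Function.update_idem, flip2_flip2, Function.update_eq_self]

lemma clm_apply (M : QOp n) (v : EuclideanSpace ℂ (QIdx n)) (x : QIdx n) :
    (Matrix.toEuclideanCLM (𝕜 := ℂ) M v) x = ∑ y, M x y * v y := rfl

/-- Norm bound for a site operator with vanishing diagonal 2×2 blocks. -/
lemma opNorm_site_offdiag (k : Fin n) (g : QIdx n → Matrix (Fin 2) (Fin 2) ℂ) (s : ℝ)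
    (hs : 0 ≤ s) (hdiag : ∀ x b, g x b b = 0) (hbd : ∀ x b b', ‖g x b b'‖ ≤ s) :
    opNorm (siteMat k g) ≤ s := by
  rw [opNorm]
  apply ContinuousLinearMap.opNorm_le_bound _ hs
  intro v
  have happ : ∀ x, (Matrix.toEuclideanCLM (𝕜 := ℂ) (siteMat k g) v) x
      = g x (x k) (flip2 (x k)) * v (Function.update x k (flip2 (x k))) := by
    intro x
    rw [clm_apply]
    rw [sum_update x k _ (by
      intro z hz
      simp only [siteMat, Matrix.of_apply]
      rw [if_neg (fun hcon => hz hcon)]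
      exact zero_mul _)]
    simp only [siteMat, Matrix.of_apply]
    have hc : ∀ c : Fin 2, (∀ j, j ≠ k → x j = Function.update x k c j) := by
      intro c j hj; simp [Function.update, hj]
    rw [Fin.sum_univ_two]
    rw [if_pos (hc 0), if_pos (hc 1)]
    simp only [Function.update_self]
    rcases (by decide : ∀ b : Fin 2, b = 0 ∨ b = 1) (x k) with hxk | hxk
    · rw [hxk, hdiag x 0, zero_mul, zero_add, show flip2 0 = 1 from rfl]
    · rw [hxk, hdiag x 1, zero_mul, add_zero, show flip2 1 = 0 from rfl]
  have hnorm : ∀ x, ‖(Matrix.toEuclideanCLM (𝕜 := ℂ) (siteMat k g) v) x‖ ≤ s * ‖v (Function.update x k (flip2 (x k)))‖ := by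
    intro x
    rw [happ, norm_mul]
    exact mul_le_mul_of_nonneg_right (hbd x _ _) (norm_nonneg _)
  have hbij : ∑ x, ‖v (Function.update x k (flip2 (x k)))‖^2 = ∑ x, ‖v x‖^2 :=
    Function.Bijective.sum_comp (sigma_invol k).bijective (fun x => ‖v x‖^2)
  calc ‖Matrix.toEuclideanCLM (𝕜 := ℂ) (siteMat k g) v‖
      = Real.sqrt (∑ x, ‖(Matrix.toEuclideanCLM (𝕜 := ℂ) (siteMat k g) v) x‖^2) :=
        EuclideanSpace.norm_eq _
    _ ≤ Real.sqrt (∑ x, (s * ‖v (Function.update x k (flip2 (x k)))‖)^2) := by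
        apply Real.sqrt_le_sqrt
        apply Finset.sum_le_sum
        intro x _
        exact pow_le_pow_left₀ (norm_nonneg _) (hnorm x) 2
    _ = Real.sqrt (s^2 * ∑ x, ‖v (Function.update x k (flip2 (x k)))‖^2) := by
        rw [Finset.mul_sum]
        congr 1
        refine Finset.sum_congr rfl fun x _ => ?_
        ring
    _ = s * Real.sqrt (∑ x, ‖v (Function.update x k (flip2 (x k)))‖^2) := by
        rw [Real.sqrt_mul (sq_nonneg s), Real.sqrt_sq hs]
    _ = s * ‖v‖ := by rw [hbij, EuclideanSpace.norm_eq]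

lemma siteMat_one (k : Fin n) :
    siteMat k (fun _ => (1 : Matrix (Fin 2) (Fin 2) ℂ)) = 1 := by
  ext x y
  simp only [siteMat, Matrix.of_apply, Matrix.one_apply]
  by_cases hB : ∀ j, j ≠ k → x j = y j
  · rw [if_pos hB]
    by_cases hk : x k = y k
    · rw [if_pos hk, if_pos (funext fun j => by
        rcases eq_or_ne j k with rfl | hj
        · exact hk
        · exact hB j hj)]
    · rw [if_neg hk, if_neg (fun hcon => hk (congrFun hcon k))]
  · rw [if_neg hB, if_neg (fun hcon => hB (fun j _ => congrFun hcon j))]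

/-- The site phase operator is a self-adjoint idempotent, hence a contraction. -/
lemma opNorm_site_pf_le_one (k : Fin n) (a : QIdx n → ℝ)
    (ha : ∀ x c, a (Function.update x k c) = a x) :
    opNorm (siteMat k (fun x => pfMat (a x))) ≤ 1 := by
  apply opNorm_le_one_of_proj
  · -- star
    ext x y
    simp only [Matrix.star_apply, siteMat, Matrix.of_apply]
    by_cases hB : ∀ j, j ≠ k → x j = y j
    · have hB' : ∀ j, j ≠ k → y j = x j := fun j hj => (hB j hj).symm
      rw [if_pos hB', if_pos hB]
      have hxy : y = Function.update x k (y k) := by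
        funext j
        rcases eq_or_ne j k with rfl | hj
        · simp [Function.update]
        · simp [Function.update, hj, hB j hj]
      have hay : a y = a x := by rw [hxy, ha]
      show (starRingEnd ℂ) (pfMat (a y) (y k) (x k)) = pfMat (a x) (x k) (y k)
      rw [hay]
      exact phaseFac_conj (a x) (y k) (x k)
    · have hB' : ¬ ∀ j, j ≠ k → y j = x j := fun hcon => hB (fun j hj => (hcon j hj).symm)
      rw [if_neg hB', if_neg hB, star_zero]
  · -- idempotent
    rw [siteMat_mul k _ _ (fun x c => by rw [ha])]
    simp only [pfMat_mul]

lemma siteMat_mix_decomp (k : Fin n) (h : ℕ) (a : QIdx n → ℝ) :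
    siteMat k (fun x => mixMat h (a x))
      = (1 - (h:ℂ)⁻¹) • (1 : QOp n) + (h:ℂ)⁻¹ • siteMat k (fun x => pfMat (a x)) := by
  rw [← siteMat_one k]
  ext x y
  simp only [siteMat, Matrix.of_apply, Matrix.add_apply, Matrix.smul_apply]
  by_cases hB : ∀ j, j ≠ k → x j = y j
  · rw [if_pos hB, if_pos hB, if_pos hB]
    show mixFac h (a x) (x k) (y k) = _
    rw [mixFac]
    simp only [Matrix.one_apply, pfMat, Matrix.of_apply, smul_eq_mul]
  · rw [if_neg hB, if_neg hB, if_neg hB]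
    simp

lemma opNorm_site_mix_le_one (k : Fin n) (h : ℕ) (hh : 1 ≤ h) (a : QIdx n → ℝ)
    (ha : ∀ x c, a (Function.update x k c) = a x) :
    opNorm (siteMat k (fun x => mixMat h (a x))) ≤ 1 := by
  rw [siteMat_mix_decomp]
  have h1 : ‖(1 - (h:ℂ)⁻¹)‖ = 1 - (h:ℝ)⁻¹ := by
    have hle : (h:ℝ)⁻¹ ≤ 1 := inv_le_one_of_one_le₀ (by exact_mod_cast hh)
    rw [show (1 - (h:ℂ)⁻¹) = (((1 - (h:ℝ)⁻¹ : ℝ)):ℂ) by push_cast; ring, Complex.norm_real]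
    exact abs_of_nonneg (by linarith)
  have h2 : ‖((h:ℂ)⁻¹)‖ = (h:ℝ)⁻¹ := by
    rw [norm_inv, Complex.norm_natCast]
  have hinv : (0:ℝ) ≤ (h:ℝ)⁻¹ := by positivity
  have hinv1 : (h:ℝ)⁻¹ ≤ 1 := by
    apply inv_le_one_of_one_le₀
    exact_mod_cast hh
  calc opNorm ((1 - (h:ℂ)⁻¹) • (1 : QOp n) + (h:ℂ)⁻¹ • siteMat k (fun x => pfMat (a x)))
      ≤ opNorm ((1 - (h:ℂ)⁻¹) • (1 : QOp n))
        + opNorm ((h:ℂ)⁻¹ • siteMat k (fun x => pfMat (a x))) := opNorm_add_le _ _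
    _ = (1 - (h:ℝ)⁻¹) * opNorm (1 : QOp n)
        + (h:ℝ)⁻¹ * opNorm (siteMat k (fun x => pfMat (a x))) := by
        rw [opNorm_smul, opNorm_smul, h1, h2]
    _ ≤ (1 - (h:ℝ)⁻¹) * 1 + (h:ℝ)⁻¹ * 1 := by
        apply add_le_add
        · rw [opNorm_one']
        · exact mul_le_mul_of_nonneg_left (opNorm_site_pf_le_one k a ha) hinv
    _ = 1 := by ring

lemma opNorm_site_mix_sub_le (k : Fin n) (h : ℕ) (hh : 1 ≤ h) (a b : QIdx n → ℝ) (s : ℝ)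
    (hs : 0 ≤ s) (hab : ∀ x, |Real.sin ((b x - a x)/2)| ≤ s) :
    opNorm (siteMat k (fun x => mixMat h (b x)) - siteMat k (fun x => mixMat h (a x)))
      ≤ (h:ℝ)⁻¹ * s := by
  rw [siteMat_sub]
  apply opNorm_site_offdiag k _ _ (by positivity)
  · intro x c
    show mixFac h (b x) c c - mixFac h (a x) c c = 0
    rw [mixFac, mixFac, phaseFac_diag, phaseFac_diag]
    ring
  · intro x c c'
    show ‖mixFac h (b x) c c' - mixFac h (a x) c c'‖ ≤ (h:ℝ)⁻¹ * s
    have hd : mixFac h (b x) c c' - mixFac h (a x) c c'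
        = (h:ℂ)⁻¹ * (phaseFac (b x) c c' - phaseFac (a x) c c') := by
      rw [mixFac, mixFac]; ring
    rw [hd, norm_mul, norm_inv, Complex.norm_natCast]
    apply mul_le_mul_of_nonneg_left _ (by positivity)
    exact le_trans (norm_phaseFac_sub (a x) (b x) c c') (hab x)

/-! ### Product telescoping bound -/

lemma prodMat_norm_le_one (f : Fin n → QIdx n → Matrix (Fin 2) (Fin 2) ℂ)
    (A : Finset (Fin n)) :
    (∀ k ∈ A, ∀ k' ∈ A, ∀ x c, f k' (Function.update x k c) = f k' x) →
    (∀ k ∈ A, opNorm (siteMat k (f k)) ≤ 1) →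
    opNorm (prodMat A f) ≤ 1 := by
  induction A using Finset.induction_on with
  | empty =>
      intro _ _
      rw [prodMat_empty, opNorm_one']
  | @insert k B hk ih =>
      intro Hf hf1
      have hmem : k ∈ insert k B := Finset.mem_insert_self k B
      have hsub : ∀ k', k' ∈ B → k' ∈ insert k B := fun k' hk' =>
        Finset.mem_insert_of_mem hk'
      have ih1 := ih (fun a ha b hb => Hf a (hsub a ha) b (hsub b hb))
        (fun a ha => hf1 a (hsub a ha))
      rw [prodMat_insert k B hk f (fun k' hk' x c => Hf k hmem k' (hsub k' hk') x c)]
      refine le_trans (opNorm_mul_le _ _) ?_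
      have := hf1 k hmem
      nlinarith [opNorm_nonneg (prodMat B f), opNorm_nonneg (siteMat k (f k))]

lemma prodMat_bound (s : ℝ) (hs : 0 ≤ s)
    (f g : Fin n → QIdx n → Matrix (Fin 2) (Fin 2) ℂ) (A : Finset (Fin n)) :
    (∀ k ∈ A, ∀ k' ∈ A, ∀ x c, f k' (Function.update x k c) = f k' x) →
    (∀ k ∈ A, ∀ k' ∈ A, ∀ x c, g k' (Function.update x k c) = g k' x) →
    (∀ k ∈ A, opNorm (siteMat k (f k)) ≤ 1) →
    (∀ k ∈ A, opNorm (siteMat k (g k)) ≤ 1) →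
    (∀ k ∈ A, opNorm (siteMat k (f k) - siteMat k (g k)) ≤ s) →
    opNorm (prodMat A f - prodMat A g) ≤ A.card * s := by
  induction A using Finset.induction_on with
  | empty =>
      intro _ _ _ _ _
      rw [prodMat_empty, prodMat_empty, sub_self, opNorm_zero']
      simp
  | @insert k B hk ih =>
      intro Hf Hg hf1 hg1 hfg
      have hmem : k ∈ insert k B := Finset.mem_insert_self k B
      have hsub : ∀ k', k' ∈ B → k' ∈ insert k B := fun k' hk' =>
        Finset.mem_insert_of_mem hk'
      have ih2 := ih
        (fun a ha b hb => Hf a (hsub a ha) b (hsub b hb))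
        (fun a ha b hb => Hg a (hsub a ha) b (hsub b hb))
        (fun a ha => hf1 a (hsub a ha)) (fun a ha => hg1 a (hsub a ha))
        (fun a ha => hfg a (hsub a ha))
      have ih1 : opNorm (prodMat B f) ≤ 1 :=
        prodMat_norm_le_one f B (fun a ha b hb => Hf a (hsub a ha) b (hsub b hb))
          (fun a ha => hf1 a (hsub a ha))
      have ef : prodMat (insert k B) f = siteMat k (f k) * prodMat B f :=
        prodMat_insert k B hk f (fun k' hk' x c => Hf k hmem k' (hsub k' hk') x c)
      have eg : prodMat (insert k B) g = siteMat k (g k) * prodMat B g :=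
        prodMat_insert k B hk g (fun k' hk' x c => Hg k hmem k' (hsub k' hk') x c)
      rw [ef, eg]
      have hsplit : siteMat k (f k) * prodMat B f - siteMat k (g k) * prodMat B g
          = (siteMat k (f k) - siteMat k (g k)) * prodMat B f
            + siteMat k (g k) * (prodMat B f - prodMat B g) := by
        noncomm_ring
      rw [hsplit]
      have b1 : opNorm ((siteMat k (f k) - siteMat k (g k)) * prodMat B f) ≤ s * 1 :=
        le_trans (opNorm_mul_le _ _)
          (mul_le_mul (hfg k hmem) ih1 (opNorm_nonneg _) hs)
      have b2 : opNorm (siteMat k (g k) * (prodMat B f - prodMat B g))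
          ≤ 1 * (B.card * s) :=
        le_trans (opNorm_mul_le _ _)
          (mul_le_mul (hg1 k hmem) ih2 (opNorm_nonneg _) zero_le_one)
      refine le_trans (opNorm_add_le _ _) ?_
      rw [Finset.card_insert_of_notMem hk]
      push_cast
      linarith

/-! ### Discretization estimates -/

lemma alphaH_close (h : ℕ) (hh : 1 ≤ h) (α : ℝ) :
    |alphaH h α - α| ≤ Real.pi / (2 * (h:ℝ)) := by
  have hπ := Real.pi_pos
  have hh0 : (0:ℝ) < h := by exact_mod_cast hh
  set t : ℝ := (h:ℝ) * α / Real.pi with ht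
  have h1 : ((⌊t + 1/2⌋ : ℤ) : ℝ) ≤ t + 1/2 := Int.floor_le _
  have h2 : t + 1/2 < ((⌊t + 1/2⌋ : ℤ) : ℝ) + 1 := Int.lt_floor_add_one _
  have hα : α = t * Real.pi / h := by
    rw [ht]
    field_simp
  have hdiff : alphaH h α - α = (((⌊t + 1/2⌋ : ℤ) : ℝ) - t) * (Real.pi / h) := by
    rw [alphaH, ← ht]
    rw [hα]
    field_simp
  rw [hdiff, abs_mul, _root_.abs_of_pos (by positivity : (0:ℝ) < Real.pi / h)]
  have key : |((⌊t + 1/2⌋ : ℤ) : ℝ) - t| ≤ 1/2 := abs_le.2 ⟨by linarith, by linarith⟩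
  calc |((⌊t + 1/2⌋ : ℤ) : ℝ) - t| * (Real.pi / h) ≤ (1/2) * (Real.pi / h) :=
        mul_le_mul_of_nonneg_right key (by positivity)
    _ = Real.pi / (2 * (h:ℝ)) := by ring

lemma sin_half_le (h : ℕ) (hh : 1 ≤ h) (α β : ℝ) (hd : |β - α| ≤ Real.pi / (2 * (h:ℝ))) :
    |Real.sin ((β - α)/2)| ≤ Real.sin (Real.pi / (4 * (h:ℝ))) := by
  have hπ := Real.pi_pos
  have hh0 : (0:ℝ) < h := by exact_mod_cast hh
  have hh1 : (1:ℝ) ≤ h := by exact_mod_cast hh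
  set t : ℝ := (β - α)/2 with ht
  have ht4 : |t| ≤ Real.pi / (4 * (h:ℝ)) := by
    rw [ht, abs_div, show |(2:ℝ)| = 2 by norm_num]
    rw [div_le_iff₀ (by norm_num : (0:ℝ) < 2)]
    calc |β - α| ≤ Real.pi / (2 * (h:ℝ)) := hd
      _ = Real.pi / (4 * (h:ℝ)) * 2 := by ring
  have hble : Real.pi / (4 * (h:ℝ)) ≤ Real.pi := by
    rw [div_le_iff₀ (by positivity)]
    nlinarith
  have hb2 : Real.pi / (4 * (h:ℝ)) ≤ Real.pi / 2 := by
    apply div_le_div_of_nonneg_left hπ.le (by norm_num)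
    linarith
  have habs : |Real.sin t| = Real.sin |t| := by
    rcases abs_cases t with ⟨he, hp⟩ | ⟨he, hn⟩
    · rw [he]
      apply _root_.abs_of_nonneg
      apply Real.sin_nonneg_of_nonneg_of_le_pi hp
      calc t = |t| := he.symm
        _ ≤ Real.pi / (4 * (h:ℝ)) := ht4
        _ ≤ Real.pi := hble
    · rw [he, Real.sin_neg]
      apply _root_.abs_of_nonpos
      apply Real.sin_nonpos_of_nonpos_of_neg_pi_le hn.le
      have h5 : |t| ≤ Real.pi := le_trans ht4 hble
      rw [he] at h5
      linarith
  rw [habs]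
  apply Real.strictMonoOn_sin.monotoneOn ?_ ?_ ht4
  · constructor
    · linarith [abs_nonneg t]
    · exact le_trans ht4 hb2
  · constructor
    · have : (0:ℝ) ≤ Real.pi / (4 * (h:ℝ)) := by positivity
      linarith
    · exact hb2

end OmegaAux

/-- `‖Ω̄_h(𝒜) - Ω̄(𝒜)_h‖ ≤ (∑_l |A_l|/(mh)) sin(π/4h) = (n/(mh)) sin(π/4h)`. -/
theorem opNorm_OmegaBarH_sub_OmegaBar
    (n m : ℕ) (hn : 1 ≤ n) (hm : 1 ≤ m)
    (G : SimpleGraph (Fin n)) (θ : Fin n → Fin n → ℝ)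
    (hsym : ∀ j k, θ j k = θ k j)
    (hθ : ∀ j k, ¬ G.Adj j k → θ j k = 0)
    (A : Fin m → Finset (Fin n))
    (hdisj : ∀ l l', l ≠ l' → Disjoint (A l) (A l'))
    (hcover : ∀ v : Fin n, ∃ l, v ∈ A l)
    (hne : ∀ l, (A l).Nonempty)
    (hind : ∀ l, ∀ j ∈ A l, ∀ k ∈ A l, ¬ G.Adj j k)
    (h : ℕ) (hh : 1 ≤ h) :
    opNorm (OmegaBarH n m θ h A - OmegaBar n m θ (fun _ => h) A) ≤
      ((∑ l, ((A l).card : ℝ)) / ((m : ℝ) * h)) * Real.sin (Real.pi / (4 * h)) ∧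
    (∑ l, ((A l).card : ℝ)) / ((m : ℝ) * h) = (n : ℝ) / ((m : ℝ) * h) := by
  classical
  have hh0 : (0:ℝ) < h := by exact_mod_cast hh
  have hm0 : (0:ℝ) < m := by exact_mod_cast hm
  have hπ := Real.pi_pos
  have hh1 : (1:ℝ) ≤ h := by exact_mod_cast hh
  have hsin0 : 0 ≤ Real.sin (Real.pi / (4 * (h:ℝ))) := by
    apply Real.sin_nonneg_of_nonneg_of_le_pi (by positivity)
    rw [div_le_iff₀ (by positivity)]
    nlinarith [hπ, hh1]
  set S : ℝ := Real.sin (Real.pi / (4 * (h:ℝ))) with hS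
  set s₀ : ℝ := (h:ℝ)⁻¹ * S with hs₀
  have hs₀0 : 0 ≤ s₀ := mul_nonneg (by positivity) hsin0
  -- angle invariance within an independent set
  have hang : ∀ l : Fin m, ∀ k ∈ A l, ∀ k' ∈ A l, ∀ (x : QIdx n) (c : Fin 2),
      alphaAngle n θ k' (Function.update x k c) = alphaAngle n θ k' x := by
    intro l k hk k' hk' x c
    have hθ0 : θ k k' = 0 := by
      rcases eq_or_ne k k' with rfl | hne
      · exact hθ k k (G.irrefl)
      · exact hθ k k' (hind l k hk k' hk')
    rw [alphaAngle, alphaAngle]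
    apply Finset.sum_congr rfl
    intro j _
    rcases eq_or_ne j k with rfl | hj
    · rw [hθ0, zero_mul, zero_mul]
    · rw [Function.update_of_ne hj]
  -- identification with the generic product operators
  have ePBar : ∀ l : Fin m, PBar n θ (fun _ => h) (A l)
      = OmegaAux.prodMat (A l) (fun k x => OmegaAux.mixMat h (alphaAngle n θ k x)) := by
    intro l
    rfl
  have ePBarH : ∀ l : Fin m, PBarH n θ h (A l)
      = OmegaAux.prodMat (A l)
          (fun k x => OmegaAux.mixMat h (alphaH h (alphaAngle n θ k x))) := by
    intro l
    rfl
  -- per-block estimate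
  have per_l : ∀ l : Fin m,
      opNorm (PBarH n θ h (A l) - PBar n θ (fun _ => h) (A l))
        ≤ ((A l).card : ℝ) * s₀ := by
    intro l
    rw [ePBar l, ePBarH l]
    apply OmegaAux.prodMat_bound s₀ hs₀0 _ _ (A l)
    · intro k hk k' hk' x c
      simp only [hang l k hk k' hk' x c]
    · intro k hk k' hk' x c
      simp only [hang l k hk k' hk' x c]
    · intro k hk
      exact OmegaAux.opNorm_site_mix_le_one k h hh _
        (fun x c => by simp only [hang l k hk k hk x c])
    · intro k hk
      exact OmegaAux.opNorm_site_mix_le_one k h hh _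
        (fun x c => by simp only [hang l k hk k hk x c])
    · intro k hk
      rw [hs₀]
      apply OmegaAux.opNorm_site_mix_sub_le k h hh
        (fun x => alphaAngle n θ k x) (fun x => alphaH h (alphaAngle n θ k x)) S hsin0
      intro x
      rw [hS]
      exact OmegaAux.sin_half_le h hh _ _ (OmegaAux.alphaH_close h hh _)
  -- cardinality identity
  have hcard : (∑ l, ((A l).card : ℝ)) = (n : ℝ) := by
    have hbu : Finset.univ.biUnion A = (Finset.univ : Finset (Fin n)) := by
      apply Finset.eq_univ_iff_forall.2
      intro v
      obtain ⟨l, hl⟩ := hcover v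
      exact Finset.mem_biUnion.2 ⟨l, Finset.mem_univ l, hl⟩
    have hc := Finset.card_biUnion
      (fun l _ l' _ hll' => hdisj l l' hll') (s := Finset.univ) (t := A)
    rw [hbu] at hc
    have : (∑ l, (A l).card) = n := by
      rw [← hc, Finset.card_univ, Fintype.card_fin]
    exact_mod_cast congrArg (Nat.cast : ℕ → ℝ) this
  constructor
  · -- main norm bound
    have hrw : OmegaBarH n m θ h A - OmegaBar n m θ (fun _ => h) A
        = (m:ℂ)⁻¹ • ∑ l, (PBarH n θ h (A l) - PBar n θ (fun _ => h) (A l)) := by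
      rw [OmegaBarH, OmegaBar, ← smul_sub, ← Finset.sum_sub_distrib]
    rw [hrw, OmegaAux.opNorm_smul]
    have hmn : ‖((m:ℂ))⁻¹‖ = (m:ℝ)⁻¹ := by
      rw [norm_inv, Complex.norm_natCast]
    rw [hmn]
    have hsum : opNorm (∑ l, (PBarH n θ h (A l) - PBar n θ (fun _ => h) (A l)))
        ≤ ∑ l, ((A l).card : ℝ) * s₀ :=
      le_trans (OmegaAux.opNorm_sum_le _ _) (Finset.sum_le_sum fun l _ => per_l l)
    calc (m:ℝ)⁻¹ * opNorm (∑ l, (PBarH n θ h (A l) - PBar n θ (fun _ => h) (A l)))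
        ≤ (m:ℝ)⁻¹ * ∑ l, ((A l).card : ℝ) * s₀ :=
          mul_le_mul_of_nonneg_left hsum (by positivity)
      _ = ((∑ l, ((A l).card : ℝ)) / ((m : ℝ) * h)) * S := by
          rw [← Finset.sum_mul, hs₀]
          field_simp
  · rw [hcard]


end
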